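/- In the ring game G with n > 3 players, there exists an infinite improvement path that contains no legitimate joint strategy; hence G does not admit self-stabilization. -/

import Mathlib

/-!
Game-theoretic formalization of Dijkstra's self-stabilization (Apt & Shoja).
Players are `Fin n`; a joint strategy is `s : Fin n → C`.
-/

/-- Payoff in the ring game `G` on the directed ring `0 → 1 → ⋯ → n-1 → 0`:
player `0` plays the anti-coordination game with respect to its predecessor
(player `n-1`, i.e. `0 - 1` in `Fin n`); every other player `i` plays the
coordination game with respect to its predecessor `i - 1`. -/
def ringPayoff {n : ℕ} [NeZero n] {C : Type*} [DecidableEq C]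
    (s : Fin n → C) (i : Fin n) : ℕ :=
  if i = 0 then (if s i = s (i - 1) then 0 else 1)
  else (if s i = s (i - 1) then 1 else 0)

/-- `s i` is a best response of player `i` to the strategies of the others in `s`. -/
def BestResponse {n : ℕ} {C : Type*}
    (p : (Fin n → C) → Fin n → ℕ) (s : Fin n → C) (i : Fin n) : Prop :=
  ∀ c : C, p (Function.update s i c) i ≤ p s i

/-- An improvement step from `s` to `s'` in which player `i` is selected:
only player `i` changes its strategy and its payoff strictly increases. -/
def StepAt {n : ℕ} {C : Type*}
    (p : (Fin n → C) → Fin n → ℕ) (i : Fin n) (s s' : Fin n → C) : Prop :=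
  (∀ j, j ≠ i → s' j = s j) ∧ p s i < p s' i

/-- A joint strategy is legitimate if exactly one player does not play a best response. -/
def Legitimate {n : ℕ} {C : Type*}
    (p : (Fin n → C) → Fin n → ℕ) (s : Fin n → C) : Prop :=
  ∃! i : Fin n, ¬ BestResponse p s i

open Fin.NatCast Fin.CommRing

namespace RingAux

/-- natural-number position of token `j ∈ {0,1,2}` at time `k` -/
def g (j k : ℕ) : ℕ := j + (k + j) / 3

/-- the (natural-number) index of the player selected at step `k` -/
def selN (k : ℕ) : ℕ := g (2 - k % 3) k

/-- boolean joint strategy at time `k` -/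
def B (n : ℕ) [NeZero n] : ℕ → Fin n → Bool
  | 0 => fun i => decide (i = (1 : Fin n))
  | (k+1) => Function.update (B n k) ((selN k : ℕ) : Fin n) (! B n k ((selN k : ℕ) : Fin n))

/-- `i` holds a token: `i` is not playing a best response -/
def tokB {n : ℕ} [NeZero n] (s : Fin n → Bool) (i : Fin n) : Bool :=
  ((s i == s (i - 1)) == decide (i = 0))

lemma one_ne_zero' {n : ℕ} [NeZero n] (hn : 2 ≤ n) : (1 : Fin n) ≠ 0 := by
  intro h
  have := congrArg Fin.val h
  rw [Fin.val_one'] at this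
  simp at this
  omega

lemma cast_eq_cast_iff {n : ℕ} [NeZero n] {x y : ℕ} (hx : x < n) (hy : y < n) :
    ((x : Fin n) = (y : Fin n)) ↔ x = y := by
  constructor
  · intro h
    have := congrArg Fin.val h
    rwa [Fin.val_natCast, Fin.val_natCast, Nat.mod_eq_of_lt hx, Nat.mod_eq_of_lt hy] at this
  · intro h; rw [h]

lemma cast_ne {n : ℕ} [NeZero n] {x y : ℕ} (hxy : x < y) (hd : y - x < n) :
    (x : Fin n) ≠ (y : Fin n) := by
  intro h
  have h2 : ((y - x : ℕ) : Fin n) = 0 := by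
    rw [Nat.cast_sub hxy.le, h, sub_self]
  have h3 := congrArg Fin.val h2
  rw [Fin.val_natCast, Nat.mod_eq_of_lt hd] at h3
  simp at h3
  omega

lemma tok_update {n : ℕ} [NeZero n] (hn : 2 ≤ n) (s : Fin n → Bool) (i j : Fin n) :
    tokB (Function.update s i (!(s i))) j =
      if j = i ∨ j = i + 1 then !(tokB s j) else tokB s j := by
  have h1 : (1 : Fin n) ≠ 0 := one_ne_zero' hn
  by_cases hji : j = i
  · subst hji
    have hne : j ≠ j + 1 := fun h => h1 (left_eq_add.mp h)
    have hsub : j - 1 ≠ j := fun h => h1 (sub_eq_self.mp h)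
    simp only [if_pos (Or.inl rfl), tokB]
    rw [Function.update_self, Function.update_of_ne hsub]
    cases s j <;> cases s (j-1) <;> cases (decide (j = 0)) <;> rfl
  · by_cases hji' : j = i + 1
    · have hsub : j - 1 = i := by rw [hji']; exact add_sub_cancel_right i 1
      simp only [if_pos (Or.inr hji'), tokB]
      rw [Function.update_of_ne hji, hsub, Function.update_self]
      cases s j <;> cases s i <;> cases (decide (j = 0)) <;> rfl
    · have hsub : j - 1 ≠ i := fun h => hji' (sub_eq_iff_eq_add.mp h)
      simp only [if_neg (by tauto : ¬ (j = i ∨ j = i + 1)), tokB]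
      rw [Function.update_of_ne hji, Function.update_of_ne hsub]

lemma step_aux {n : ℕ} [NeZero n] (hn : 4 ≤ n) (s : Fin n → Bool) (t1 t2 t3 i : Fin n)
    (ih : ∀ j, tokB s j = true ↔ (j = t1 ∨ j = t2 ∨ j = t3))
    (hi : i = t1 ∨ i = t2 ∨ i = t3)
    (hnew : (i + 1 ≠ t1 ∧ i + 1 ≠ t2 ∧ i + 1 ≠ t3)) (j : Fin n) :
    tokB (Function.update s i (!(s i))) j = true ↔
      (((j = t1 ∨ j = t2 ∨ j = t3) ∧ j ≠ i) ∨ j = i + 1) := by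
  have hn2 : 2 ≤ n := by omega
  rw [tok_update hn2 s i j]
  by_cases h1 : j = i
  · subst h1
    have hii : j ≠ j + 1 := fun h => (one_ne_zero' hn2) (left_eq_add.mp h)
    rw [if_pos (Or.inl rfl), (ih j).mpr hi]
    simp only [Bool.not_true, Bool.false_eq_true, false_iff]
    rintro (⟨_, hne⟩ | h)
    · exact hne rfl
    · exact hii h
  · by_cases h2 : j = i + 1
    · rw [if_pos (Or.inr h2)]
      have hf : tokB s j = false := by
        cases h : tokB s j
        · rfl
        · exfalso
          subst h2
          rcases (ih _).mp h with h' | h' | h'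
          · exact hnew.1 h'
          · exact hnew.2.1 h'
          · exact hnew.2.2 h'
      rw [hf]
      simp only [Bool.not_false, true_iff]
      exact Or.inr h2
    · rw [if_neg (by tauto : ¬ (j = i ∨ j = i + 1)), ih j]
      tauto

/-- Main invariant: the tokens of `B n k` are exactly at `g 0 k, g 1 k, g 2 k`. -/
lemma inv (n : ℕ) [NeZero n] (hn : 4 ≤ n) (k : ℕ) (j : Fin n) :
    tokB (B n k) j = true ↔
      (j = ((g 0 k : ℕ) : Fin n) ∨ j = ((g 1 k : ℕ) : Fin n) ∨ j = ((g 2 k : ℕ) : Fin n)) := by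
  have hn2 : 2 ≤ n := by omega
  have hcast : ∀ m a b : ℕ, a < b → b ≤ a + 3 → ((m + a : ℕ) : Fin n) ≠ ((m + b : ℕ) : Fin n) := by
    intro m a b hab hb
    exact cast_ne (by omega) (by omega)
  induction k generalizing j with
  | zero =>
    have h0 : g 0 0 = 0 := by unfold g; omega
    have h1 : g 1 0 = 1 := by unfold g; omega
    have h2 : g 2 0 = 2 := by unfold g; omega
    rw [h0, h1, h2]
    have e0 : ((0:ℕ) : Fin n) = (0 : Fin n) := Nat.cast_zero
    have e1 : ((1:ℕ) : Fin n) = (1 : Fin n) := Nat.cast_one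
    have d01 : (0 : Fin n) ≠ (1 : Fin n) := fun h => (one_ne_zero' hn2) h.symm
    have d02 : ((0:ℕ) : Fin n) ≠ ((2:ℕ) : Fin n) := cast_ne (by omega) (by omega)
    have d12 : ((1:ℕ) : Fin n) ≠ ((2:ℕ) : Fin n) := cast_ne (by omega) (by omega)
    have e2 : (j - 1 = (1 : Fin n)) ↔ (j = ((2:ℕ) : Fin n)) := by
      rw [sub_eq_iff_eq_add]
      constructor <;> intro h <;> rw [h] <;> push_cast <;> ring
    show ((decide (j = (1:Fin n)) == decide ((j - 1) = (1:Fin n))) == decide (j = 0)) = true ↔ _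
    rw [e0, e1]
    by_cases ha : j = (0 : Fin n) <;> by_cases hb : j = (1 : Fin n) <;>
      by_cases hc : j = ((2:ℕ) : Fin n) <;>
      simp_all [e2]
  | succ k ih =>
    obtain ⟨m, r, hr, hk⟩ : ∃ m r, r < 3 ∧ k = 3*m + r := ⟨k/3, k%3, by omega, by omega⟩
    subst hk
    interval_cases r
    · -- r = 0 : sel = m+2, old {m, m+1, m+2}, new {m, m+1, m+3}
      simp only [Nat.add_zero] at ih ⊢
      have hB : B n (3*m+1) =
          Function.update (B n (3*m)) ((selN (3*m) : ℕ) : Fin n)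
            (! B n (3*m) ((selN (3*m) : ℕ) : Fin n)) := rfl
      have hsel : selN (3*m) = m + 2 := by unfold selN g; omega
      have hg0 : g 0 (3*m) = m + 0 := by unfold g; omega
      have hg1 : g 1 (3*m) = m + 1 := by unfold g; omega
      have hg2 : g 2 (3*m) = m + 2 := by unfold g; omega
      have hg0' : g 0 (3*m+1) = m + 0 := by unfold g; omega
      have hg1' : g 1 (3*m+1) = m + 1 := by unfold g; omega
      have hg2' : g 2 (3*m+1) = m + 3 := by unfold g; omega
      have hu : ((m+2 : ℕ) : Fin n) + 1 = ((m+3 : ℕ) : Fin n) := by push_cast; ring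
      rw [hB, hsel, hg0', hg1', hg2']
      have ih' : ∀ j : Fin n, tokB (B n (3*m)) j = true ↔
          (j = ((m+0:ℕ) : Fin n) ∨ j = ((m+1:ℕ) : Fin n) ∨ j = ((m+2:ℕ) : Fin n)) := by
        intro j; have h := ih j; rw [hg0, hg1, hg2] at h; exact h
      rw [step_aux hn (B n (3*m)) _ _ _ _ ih'
          (Or.inr (Or.inr rfl))
          (by rw [hu]; exact ⟨(hcast m 0 3 (by omega) (by omega)).symm,
            (hcast m 1 3 (by omega) (by omega)).symm, (hcast m 2 3 (by omega) (by omega)).symm⟩) j]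
      rw [hu]
      have d02 := hcast m 0 2 (by omega) (by omega)
      have d12 := hcast m 1 2 (by omega) (by omega)
      constructor
      · rintro (⟨(rfl | rfl | rfl), hne⟩ | rfl)
        · exact Or.inl rfl
        · exact Or.inr (Or.inl rfl)
        · exact absurd rfl hne
        · exact Or.inr (Or.inr rfl)
      · rintro (rfl | rfl | rfl)
        · exact Or.inl ⟨Or.inl rfl, d02⟩
        · exact Or.inl ⟨Or.inr (Or.inl rfl), d12⟩
        · exact Or.inr rfl
    · -- r = 1 : sel = m+1, old {m, m+1, m+3}, new {m, m+2, m+3}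
      have hB : B n (3*m+1+1) =
          Function.update (B n (3*m+1)) ((selN (3*m+1) : ℕ) : Fin n)
            (! B n (3*m+1) ((selN (3*m+1) : ℕ) : Fin n)) := rfl
      have hsel : selN (3*m+1) = m + 1 := by unfold selN g; omega
      have hg0 : g 0 (3*m+1) = m + 0 := by unfold g; omega
      have hg1 : g 1 (3*m+1) = m + 1 := by unfold g; omega
      have hg2 : g 2 (3*m+1) = m + 3 := by unfold g; omega
      have hg0' : g 0 (3*m+1+1) = m + 0 := by unfold g; omega
      have hg1' : g 1 (3*m+1+1) = m + 2 := by unfold g; omega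
      have hg2' : g 2 (3*m+1+1) = m + 3 := by unfold g; omega
      have hu : ((m+1 : ℕ) : Fin n) + 1 = ((m+2 : ℕ) : Fin n) := by push_cast; ring
      rw [hB, hsel, hg0', hg1', hg2']
      have ih' : ∀ j : Fin n, tokB (B n (3*m+1)) j = true ↔
          (j = ((m+0:ℕ) : Fin n) ∨ j = ((m+1:ℕ) : Fin n) ∨ j = ((m+3:ℕ) : Fin n)) := by
        intro j; have h := ih j; rw [hg0, hg1, hg2] at h; exact h
      rw [step_aux hn (B n (3*m+1)) _ _ _ _ ih'
          (Or.inr (Or.inl rfl))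
          (by rw [hu]; exact ⟨(hcast m 0 2 (by omega) (by omega)).symm,
            (hcast m 1 2 (by omega) (by omega)).symm, hcast m 2 3 (by omega) (by omega)⟩) j]
      rw [hu]
      have d01 := hcast m 0 1 (by omega) (by omega)
      have d31 := (hcast m 1 3 (by omega) (by omega)).symm
      constructor
      · rintro (⟨(rfl | rfl | rfl), hne⟩ | rfl)
        · exact Or.inl rfl
        · exact absurd rfl hne
        · exact Or.inr (Or.inr rfl)
        · exact Or.inr (Or.inl rfl)
      · rintro (rfl | rfl | rfl)
        · exact Or.inl ⟨Or.inl rfl, d01⟩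
        · exact Or.inr rfl
        · exact Or.inl ⟨Or.inr (Or.inr rfl), d31⟩
    · -- r = 2 : sel = m, old {m, m+2, m+3}, new {m+1, m+2, m+3}
      have hB : B n (3*m+2+1) =
          Function.update (B n (3*m+2)) ((selN (3*m+2) : ℕ) : Fin n)
            (! B n (3*m+2) ((selN (3*m+2) : ℕ) : Fin n)) := rfl
      have hsel : selN (3*m+2) = m + 0 := by unfold selN g; omega
      have hg0 : g 0 (3*m+2) = m + 0 := by unfold g; omega
      have hg1 : g 1 (3*m+2) = m + 2 := by unfold g; omega
      have hg2 : g 2 (3*m+2) = m + 3 := by unfold g; omega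
      have hg0' : g 0 (3*m+2+1) = m + 1 := by unfold g; omega
      have hg1' : g 1 (3*m+2+1) = m + 2 := by unfold g; omega
      have hg2' : g 2 (3*m+2+1) = m + 3 := by unfold g; omega
      have hu : ((m+0 : ℕ) : Fin n) + 1 = ((m+1 : ℕ) : Fin n) := by push_cast; ring
      rw [hB, hsel, hg0', hg1', hg2']
      have ih' : ∀ j : Fin n, tokB (B n (3*m+2)) j = true ↔
          (j = ((m+0:ℕ) : Fin n) ∨ j = ((m+2:ℕ) : Fin n) ∨ j = ((m+3:ℕ) : Fin n)) := by
        intro j; have h := ih j; rw [hg0, hg1, hg2] at h; exact h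
      rw [step_aux hn (B n (3*m+2)) _ _ _ _ ih'
          (Or.inl rfl)
          (by rw [hu]; exact ⟨(hcast m 0 1 (by omega) (by omega)).symm,
            hcast m 1 2 (by omega) (by omega), hcast m 1 3 (by omega) (by omega)⟩) j]
      rw [hu]
      have d20 := (hcast m 0 2 (by omega) (by omega)).symm
      have d30 := (hcast m 0 3 (by omega) (by omega)).symm
      constructor
      · rintro (⟨(rfl | rfl | rfl), hne⟩ | rfl)
        · exact absurd rfl hne
        · exact Or.inr (Or.inl rfl)
        · exact Or.inr (Or.inr rfl)
        · exact Or.inl rfl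
      · rintro (rfl | rfl | rfl)
        · exact Or.inr rfl
        · exact Or.inl ⟨Or.inr (Or.inl rfl), d20⟩
        · exact Or.inl ⟨Or.inr (Or.inr rfl), d30⟩

lemma payoff_tok {n : ℕ} [NeZero n] {C : Type*} [DecidableEq C] {a b : C} (hab : a ≠ b)
    (s : Fin n → Bool) (i : Fin n) :
    ringPayoff (fun x => cond (s x) b a) i = if tokB s i = true then 0 else 1 := by
  unfold ringPayoff tokB
  by_cases h0 : i = 0 <;> cases hsi : s i <;> cases hsi' : s (i-1) <;>
    simp_all [hab, Ne.symm hab]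

lemma exists_improve {n : ℕ} [NeZero n] {C : Type*} [DecidableEq C] [Fintype C]
    (hC : 2 ≤ Fintype.card C) (hn2 : 2 ≤ n) (σ : Fin n → C) (i : Fin n) :
    ∃ c, ringPayoff (Function.update σ i c) i = 1 := by
  haveI : Nontrivial C := Fintype.one_lt_card_iff_nontrivial.mp (by omega)
  have hsub : i - 1 ≠ i := fun h => absurd (sub_eq_self.mp h) (one_ne_zero' hn2)
  by_cases h0 : i = 0
  · obtain ⟨c, hc⟩ := exists_ne (σ (i - 1))
    refine ⟨c, ?_⟩
    unfold ringPayoff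
    rw [Function.update_self, Function.update_of_ne hsub, if_pos h0, if_neg hc]
  · refine ⟨σ (i - 1), ?_⟩
    unfold ringPayoff
    rw [Function.update_self, Function.update_of_ne hsub, if_neg h0, if_pos rfl]

lemma not_br {n : ℕ} [NeZero n] {C : Type*} [DecidableEq C] [Fintype C]
    (hC : 2 ≤ Fintype.card C) (hn2 : 2 ≤ n) (σ : Fin n → C) (i : Fin n)
    (h : ringPayoff σ i = 0) : ¬ BestResponse (ringPayoff (n := n) (C := C)) σ i := by
  obtain ⟨c, hc⟩ := exists_improve hC hn2 σ i
  intro hbr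
  have := hbr c
  rw [h, hc] at this
  omega

lemma cast_ne' {n : ℕ} [NeZero n] (hn : 4 ≤ n) {x y : ℕ} (h : x ≠ y)
    (hd1 : x ≤ y + 3) (hd2 : y ≤ x + 3) : (x : Fin n) ≠ (y : Fin n) := by
  rcases Nat.lt_or_ge x y with hlt | hge
  · exact cast_ne hlt (by omega)
  · exact (cast_ne (by omega : y < x) (by omega)).symm

end RingAux

theorem ring_game_no_self_stabilization_for_more_than_three_players
    (n : ℕ) [NeZero n] (hn : 3 < n)
    (C : Type*) [Fintype C] [DecidableEq C] (hC : 2 ≤ Fintype.card C) :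
    (∃ (σ : ℕ → Fin n → C) (sel : ℕ → Fin n),
        (∀ k : ℕ, StepAt (ringPayoff (n := n) (C := C)) (sel k) (σ k) (σ (k + 1))) ∧
        (∀ m : ℕ, ¬ Legitimate (ringPayoff (n := n) (C := C)) (σ m))) ∧
    ¬ (∀ (σ : ℕ → Fin n → C) (sel : ℕ → Fin n),
        (∀ k : ℕ, StepAt (ringPayoff (n := n) (C := C)) (sel k) (σ k) (σ (k + 1))) →
        ((∀ (i : Fin n) (k : ℕ), ∃ m, k ≤ m ∧ sel m = i) ∧
         (∃ K : ℕ, ∀ m, K ≤ m → Legitimate (ringPayoff (n := n) (C := C)) (σ m)))) := by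
  have hn4 : 4 ≤ n := hn
  have hn2 : 2 ≤ n := by omega
  haveI : Nontrivial C := Fintype.one_lt_card_iff_nontrivial.mp (by omega)
  obtain ⟨a, b, hab⟩ := exists_pair_ne C
  have hab' : b ≠ a := Ne.symm hab
  set σ : ℕ → Fin n → C := fun k x => cond (RingAux.B n k x) b a with hσ
  set sel : ℕ → Fin n := fun k => ((RingAux.selN k : ℕ) : Fin n) with hselF
  -- the selected player holds a token before the step
  have hsel_tok : ∀ k, RingAux.tokB (RingAux.B n k) (sel k) = true := by
    intro k
    have hd : RingAux.selN k = RingAux.g 0 k ∨ RingAux.selN k = RingAux.g 1 k ∨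
        RingAux.selN k = RingAux.g 2 k := by
      unfold RingAux.selN RingAux.g; omega
    refine (RingAux.inv n hn4 k (sel k)).mpr ?_
    rcases hd with h | h | h
    · exact Or.inl (congrArg (fun x : ℕ => ((x : Fin n))) h)
    · exact Or.inr (Or.inl (congrArg (fun x : ℕ => ((x : Fin n))) h))
    · exact Or.inr (Or.inr (congrArg (fun x : ℕ => ((x : Fin n))) h))
  -- and no token after the step
  have hsel_tok' : ∀ k, RingAux.tokB (RingAux.B n (k+1)) (sel k) = false := by
    intro k
    have hb : (RingAux.selN k ≠ RingAux.g 0 (k+1) ∧ RingAux.selN k ≤ RingAux.g 0 (k+1) + 3 ∧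
          RingAux.g 0 (k+1) ≤ RingAux.selN k + 3) ∧
        (RingAux.selN k ≠ RingAux.g 1 (k+1) ∧ RingAux.selN k ≤ RingAux.g 1 (k+1) + 3 ∧
          RingAux.g 1 (k+1) ≤ RingAux.selN k + 3) ∧
        (RingAux.selN k ≠ RingAux.g 2 (k+1) ∧ RingAux.selN k ≤ RingAux.g 2 (k+1) + 3 ∧
          RingAux.g 2 (k+1) ≤ RingAux.selN k + 3) := by
      unfold RingAux.selN RingAux.g; omega
    cases h : RingAux.tokB (RingAux.B n (k+1)) (sel k)
    · rfl
    · exfalso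
      rcases (RingAux.inv n hn4 (k+1) (sel k)).mp h with h' | h' | h'
      · exact RingAux.cast_ne' hn4 hb.1.1 hb.1.2.1 hb.1.2.2 h'
      · exact RingAux.cast_ne' hn4 hb.2.1.1 hb.2.1.2.1 hb.2.1.2.2 h'
      · exact RingAux.cast_ne' hn4 hb.2.2.1 hb.2.2.2.1 hb.2.2.2.2 h'
  have hstep : ∀ k : ℕ, StepAt (ringPayoff (n := n) (C := C)) (sel k) (σ k) (σ (k + 1)) := by
    intro k
    constructor
    · intro j hj
      show cond (RingAux.B n (k+1) j) b a = cond (RingAux.B n k j) b a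
      have : RingAux.B n (k+1) j = RingAux.B n k j := Function.update_of_ne hj _ _
      rw [this]
    · have h1 : ringPayoff (σ k) (sel k) = 0 := by
        show ringPayoff (fun x => cond (RingAux.B n k x) b a) (sel k) = 0
        rw [RingAux.payoff_tok hab, hsel_tok k]
        simp
      have h2 : ringPayoff (σ (k+1)) (sel k) = 1 := by
        show ringPayoff (fun x => cond (RingAux.B n (k+1) x) b a) (sel k) = 1
        rw [RingAux.payoff_tok hab, hsel_tok' k]
        simp
      rw [h1, h2]
      omega
  have hnl : ∀ m : ℕ, ¬ Legitimate (ringPayoff (n := n) (C := C)) (σ m) := by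
    intro m
    set t1 : Fin n := ((RingAux.g 0 m : ℕ) : Fin n) with ht1d
    set t2 : Fin n := ((RingAux.g 1 m : ℕ) : Fin n) with ht2d
    have ht12 : t1 ≠ t2 := by
      refine RingAux.cast_ne (x := RingAux.g 0 m) (y := RingAux.g 1 m) ?_ ?_
      · unfold RingAux.g; omega
      · have : RingAux.g 1 m ≤ RingAux.g 0 m + 2 := by unfold RingAux.g; omega
        omega
    have hp1 : ringPayoff (σ m) t1 = 0 := by
      show ringPayoff (fun x => cond (RingAux.B n m x) b a) t1 = 0
      rw [RingAux.payoff_tok hab, (RingAux.inv n hn4 m t1).mpr (Or.inl rfl)]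
      simp
    have hp2 : ringPayoff (σ m) t2 = 0 := by
      show ringPayoff (fun x => cond (RingAux.B n m x) b a) t2 = 0
      rw [RingAux.payoff_tok hab, (RingAux.inv n hn4 m t2).mpr (Or.inr (Or.inl rfl))]
      simp
    rintro ⟨w, hw, hu⟩
    exact ht12 ((hu t1 (RingAux.not_br hC hn2 (σ m) t1 hp1)).trans
      (hu t2 (RingAux.not_br hC hn2 (σ m) t2 hp2)).symm)
  refine ⟨⟨σ, sel, hstep, hnl⟩, ?_⟩
  intro h
  obtain ⟨_, K, hK⟩ := h σ sel hstep
  exact hnl K (hK K le_rfl)
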